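/- The formula A.[x,y:r] := [dx - cy, ay - bx : r] defines a left action of SL(2,Z) on the integral Heisenberg group H(L) by group automorphisms. -/
import Mathlib

/-- The multiplication of the integral Heisenberg group on triples `[x,y:r]`:
`[x,y:r]·[x',y':r'] = [x+x', y+y', r+r'+½((x,y')-(x',y))]`. -/
noncomputable def heisMul {V : Type*} [AddCommGroup V] [Module ℝ V]
    (B : V →ₗ[ℝ] V →ₗ[ℝ] ℝ) (p q : V × V × ℝ) : V × V × ℝ :=
  (p.1 + q.1, p.2.1 + q.2.1, p.2.2 + q.2.2 + (B p.1 q.2.1 - B q.1 p.2.1) / 2)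

/-- The `SL(2,ℤ)`-action `A.[x,y:r] = [dx - cy, ay - bx : r]` for `A = (a b; c d)`. -/
def slAct {V : Type*} [AddCommGroup V] [Module ℝ V]
    (a b c d : ℤ) (p : V × V × ℝ) : V × V × ℝ :=
  (d • p.1 - c • p.2.1, a • p.2.1 - b • p.1, p.2.2)

lemma Bz {V : Type*} [AddCommGroup V] [Module ℝ V]
    (B : V →ₗ[ℝ] V →ₗ[ℝ] ℝ) (n m : ℤ) (u w : V) :
    B (n • u) (m • w) = (n : ℝ) * (m : ℝ) * B u w := by
  rw [map_zsmul, map_zsmul, LinearMap.smul_apply]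
  simp [zsmul_eq_mul]; ring

/-- `A.[x,y:r] := [dx - cy, ay - bx : r]` defines a left action of `SL(2,ℤ)` on the
integral Heisenberg group `H(L)` by group automorphisms: the identity acts trivially,
the action is compatible with matrix multiplication, each `A` preserves the
Heisenberg multiplication, and the action preserves `H(L)` (membership of the
vector components in `L` and the half-integrality condition `r + ½(x,y) ∈ ℤ`). -/
theorem slAct_is_action_by_automorphisms (V : Type*) [AddCommGroup V] [Module ℝ V]
    (B : V →ₗ[ℝ] V →ₗ[ℝ] ℝ) (hB : ∀ u w : V, B u w = B w u)
    (L : Submodule ℤ V)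
    (hint : ∀ u ∈ L, ∀ w ∈ L, ∃ n : ℤ, B u w = (n : ℝ))
    (heven : ∀ u ∈ L, ∃ n : ℤ, B u u = 2 * (n : ℝ)) :
    (∀ p : V × V × ℝ, slAct 1 0 0 1 p = p) ∧
    (∀ a b c d a' b' c' d' : ℤ, a * d - b * c = 1 → a' * d' - b' * c' = 1 →
      ∀ p : V × V × ℝ,
        slAct (a * a' + b * c') (a * b' + b * d') (c * a' + d * c') (c * b' + d * d') p =
          slAct a b c d (slAct a' b' c' d' p)) ∧
    (∀ a b c d : ℤ, a * d - b * c = 1 → ∀ p q : V × V × ℝ,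
      slAct a b c d (heisMul B p q) = heisMul B (slAct a b c d p) (slAct a b c d q)) ∧
    (∀ a b c d : ℤ, a * d - b * c = 1 → ∀ p : V × V × ℝ,
      p.1 ∈ L → p.2.1 ∈ L → (∃ n : ℤ, p.2.2 + B p.1 p.2.1 / 2 = (n : ℝ)) →
        (slAct a b c d p).1 ∈ L ∧ (slAct a b c d p).2.1 ∈ L ∧
          ∃ n : ℤ, (slAct a b c d p).2.2 + B (slAct a b c d p).1 (slAct a b c d p).2.1 / 2 = (n : ℝ)) := by
  refine ⟨?_, ?_, ?_, ?_⟩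
  · intro p; simp [slAct]
  · intro a b c d a' b' c' d' _ _ p
    simp only [slAct, Prod.mk.injEq]
    refine ⟨by module, by module, trivial⟩
  · intro a b c d hdet p q
    simp only [slAct, heisMul, Prod.mk.injEq]
    refine ⟨by module, by module, ?_⟩
    simp only [map_sub, LinearMap.sub_apply, Bz]
    rw [hB q.1 p.1, hB q.2.1 p.2.1, hB q.1 p.2.1, hB q.2.1 p.1]
    have : (a : ℝ) * d - b * c = 1 := by exact_mod_cast congrArg (Int.cast : ℤ → ℝ) hdet
    linear_combination (-(B p.1 q.2.1 - B p.2.1 q.1)/2) * this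
  · intro a b c d hdet p hx hy ⟨n, hn⟩
    refine ⟨sub_mem (Submodule.smul_mem _ _ hx) (Submodule.smul_mem _ _ hy),
      sub_mem (Submodule.smul_mem _ _ hy) (Submodule.smul_mem _ _ hx), ?_⟩
    obtain ⟨k, hk⟩ := hint p.1 hx p.2.1 hy
    obtain ⟨m, hm⟩ := heven p.1 hx
    obtain ⟨m', hm'⟩ := heven p.2.1 hy
    refine ⟨n + b * c * k - d * b * m - c * a * m', ?_⟩
    simp only [slAct, map_sub, LinearMap.sub_apply, Bz]
    rw [hB p.2.1 p.1]
    have hd : (a : ℝ) * d - b * c = 1 := by exact_mod_cast congrArg (Int.cast : ℤ → ℝ) hdet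
    push_cast
    linear_combination hn + (((d:ℝ)*a + c*b)/2 - 1/2) * hk - ((c:ℝ)*a)/2 * hm' - ((d:ℝ)*b)/2 * hm + (k:ℝ)/2 * hd
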